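/- Let n ≥ 2 and let J > 0, h > 0 be such that h/J is not an integer and h/J < n−1. For the Glauber energy landscape on the complete graph K_n, the energy barrier equals Γ* = n*·(J·(n−n*) − h), where n* = ⌈(n−1−h/J)/2⌉. -/

import Mathlib

/-- Spin value of a Boolean: `+1` for `true`, `−1` for `false`. -/
def spin (b : Bool) : ℝ := if b then 1 else -1

/-- The product of the spins at the two endpoints of an unoriented edge. -/
noncomputable def edgeEnergy {V : Type*} (σ : V → Bool) : Sym2 V → ℝ :=
  Sym2.lift ⟨fun v w => spin (σ v) * spin (σ w), fun v w => by ring⟩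

/-- The Hamiltonian `H(σ) = −(J/2)·Σ_{(v,w)∈E} σ(v)σ(w) − (h/2)·Σ_v σ(v)` of a
multigraph with edge multiset `E` (edges counted with multiplicity). -/
noncomputable def hamiltonian {V : Type*} [Fintype V] (J h : ℝ)
    (E : Multiset (Sym2 V)) (σ : V → Bool) : ℝ :=
  -(J/2) * (E.map (edgeEnergy σ)).sum - (h/2) * ∑ v, spin (σ v)

/-- Two spin configurations differ at exactly one vertex. -/
def IsFlipStep {V : Type*} [DecidableEq V] (σ τ : V → Bool) : Prop :=
  ∃ v, τ = Function.update σ v (! σ v)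

/-- The communication height `Φ(ξ,ζ)`: the minimum over paths `γ : ξ → ζ` of
single spin-flips of the maximal energy along the path. -/
noncomputable def commHeight {V : Type*} [Fintype V] [DecidableEq V]
    (H : (V → Bool) → ℝ) (ξ ζ : V → Bool) : ℝ :=
  sInf { M : ℝ | ∃ (k : ℕ) (γ : Fin (k+1) → (V → Bool)),
    γ 0 = ξ ∧ γ (Fin.last k) = ζ ∧
    (∀ i : Fin k, IsFlipStep (γ i.castSucc) (γ i.succ)) ∧
    M = Finset.univ.sup' ⟨0, Finset.mem_univ 0⟩ (fun i => H (γ i)) }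

/-- The energy barrier `Γ* = Φ(⊟,⊞) − H(⊟)` of an energy landscape `H` on spin
configurations. -/
noncomputable def gammaStar {V : Type*} [Fintype V] [DecidableEq V]
    (H : (V → Bool) → ℝ) : ℝ :=
  commHeight H (fun _ => false) (fun _ => true) - H (fun _ => false)


/-- The edge multiset of the complete graph `K_n` on `Fin n`: all non-diagonal
unordered pairs, each once. -/
def completeEdges (n : ℕ) : Multiset (Sym2 (Fin n)) :=
  (Finset.univ.filter (fun e : Sym2 (Fin n) => ¬ e.IsDiag)).val

open Finset

private def cU {n : ℕ} (σ : Fin n → Bool) : ℕ :=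
  (Finset.univ.filter (fun v => σ v = true)).card

private lemma sum_spin_eq {n : ℕ} (σ : Fin n → Bool) :
    ∑ v, spin (σ v) = 2 * (cU σ : ℝ) - n := by
  have h1 : ∀ v : Fin n, spin (σ v) = 2 * (if σ v = true then (1:ℝ) else 0) - 1 := by
    intro v; cases hv : σ v <;> norm_num [spin, hv]
  rw [Finset.sum_congr rfl (fun v _ => h1 v), Finset.sum_sub_distrib,
    ← Finset.mul_sum, Finset.sum_boole]
  simp [cU]

private lemma edge_sum_eq {n : ℕ} (σ : Fin n → Bool) :
    ((completeEdges n).map (edgeEnergy σ)).sum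
      = ((∑ v, spin (σ v))^2 - n) / 2 := by
  have key : ∑ e ∈ univ.filter (fun e : Sym2 (Fin n) => ¬ e.IsDiag),
      2 * edgeEnergy σ e = (∑ v, spin (σ v))^2 - n := by
    have hmap : ∀ p ∈ (univ : Finset (Fin n)).offDiag,
        Sym2.mk p.1 p.2 ∈ univ.filter (fun e : Sym2 (Fin n) => ¬ e.IsDiag) := by
      rintro ⟨x,y⟩ hp
      simp only [Finset.mem_offDiag, Finset.mem_univ, true_and] at hp
      simp [Sym2.mk_isDiag_iff, hp]
    have hfib := Finset.sum_fiberwise_of_maps_to hmap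
      (fun p => spin (σ p.1) * spin (σ p.2))
    have inner : ∀ e ∈ univ.filter (fun e : Sym2 (Fin n) => ¬ e.IsDiag),
        ∑ p ∈ (univ : Finset (Fin n)).offDiag.filter (fun p => Sym2.mk p.1 p.2 = e),
          spin (σ p.1) * spin (σ p.2) = 2 * edgeEnergy σ e := by
      intro e he
      induction e using Sym2.ind with
      | _ a b =>
        simp only [Finset.mem_filter, Sym2.mk_isDiag_iff] at he
        have hab : a ≠ b := he.2
        have hfs : (univ : Finset (Fin n)).offDiag.filter (fun p => Sym2.mk p.1 p.2 = s(a,b))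
            = {(a,b),(b,a)} := by
          ext ⟨x, y⟩
          simp only [Finset.mem_offDiag, Finset.mem_filter, Finset.mem_univ, true_and,
            Sym2.eq_iff, Finset.mem_insert, Finset.mem_singleton, Prod.ext_iff]
          constructor
          · rintro ⟨hne, hor⟩; tauto
          · rintro (⟨rfl, rfl⟩ | ⟨rfl, rfl⟩) <;> exact ⟨by tauto, by tauto⟩
        rw [hfs, Finset.sum_pair (by simp [Prod.ext_iff]; tauto)]
        simp [edgeEnergy]
        ring
    rw [Finset.sum_congr rfl inner] at hfib
    rw [hfib]
    have hsplit : ∑ p ∈ (univ : Finset (Fin n)) ×ˢ univ, spin (σ p.1) * spin (σ p.2)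
        = ∑ p ∈ (univ : Finset (Fin n)).diag, spin (σ p.1) * spin (σ p.2)
          + ∑ p ∈ (univ : Finset (Fin n)).offDiag, spin (σ p.1) * spin (σ p.2) := by
      rw [← Finset.diag_union_offDiag, Finset.sum_union (Finset.disjoint_diag_offDiag _)]
    have hprod : ∑ p ∈ (univ : Finset (Fin n)) ×ˢ univ, spin (σ p.1) * spin (σ p.2)
        = (∑ v, spin (σ v))^2 := by
      rw [sq, Finset.sum_mul_sum, Finset.sum_product]
    have hdiag : ∑ p ∈ (univ : Finset (Fin n)).diag, spin (σ p.1) * spin (σ p.2) = n := by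
      rw [Finset.sum_diag]
      have h1 : ∀ v : Fin n, spin (σ v) * spin (σ v) = 1 := by
        intro v; cases σ v <;> simp [spin]
      simp [h1]
    linarith [hsplit, hprod, hdiag]
  have hrfl : ((completeEdges n).map (edgeEnergy σ)).sum
      = ∑ e ∈ univ.filter (fun e : Sym2 (Fin n) => ¬ e.IsDiag), edgeEnergy σ e := rfl
  rw [← Finset.mul_sum] at key
  rw [hrfl]; linarith

private lemma ham_eq {n : ℕ} (J h : ℝ) (σ : Fin n → Bool) :
    hamiltonian J h (completeEdges n) σ =
      -(J/4) * ((2*(cU σ : ℝ) - n)^2 - n) - (h/2) * (2*(cU σ : ℝ) - n) := by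
  rw [hamiltonian, edge_sum_eq, sum_spin_eq]; ring

private lemma nat_ivt : ∀ (m : ℕ) (f : ℕ → ℕ), (∀ i, i < m → f (i+1) ≤ f i + 1) →
    ∀ k, f 0 ≤ k → k ≤ f m → ∃ i, i ≤ m ∧ f i = k := by
  intro m
  induction m with
  | zero => intro f _ k h0 h1; exact ⟨0, le_refl 0, by omega⟩
  | succ m ih =>
    intro f hstep k h0 h1
    by_cases hk : k ≤ f m
    · obtain ⟨i, him, hfi⟩ := ih f (fun i hi => hstep i (by omega)) k h0 hk
      exact ⟨i, by omega, hfi⟩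
    · have := hstep m (by omega)
      exact ⟨m+1, le_refl _, by omega⟩

private lemma card_flip {n : ℕ} {σ τ : Fin n → Bool} (hf : IsFlipStep σ τ) :
    cU τ ≤ cU σ + 1 := by
  obtain ⟨v, rfl⟩ := hf
  have hsub : Finset.univ.filter (fun w => Function.update σ v (!σ v) w = true)
      ⊆ insert v (Finset.univ.filter (fun w => σ w = true)) := by
    intro w hw
    rcases eq_or_ne w v with rfl | hwv
    · exact Finset.mem_insert_self _ _
    · simp only [Finset.mem_filter, Function.update_of_ne hwv] at hw
      exact Finset.mem_insert_of_mem (Finset.mem_filter.2 hw)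
  calc cU _ ≤ (insert v (Finset.univ.filter (fun w => σ w = true))).card :=
        Finset.card_le_card hsub
    _ ≤ cU σ + 1 := Finset.card_insert_le _ _

private lemma card_threshold {n : ℕ} (m : ℕ) (hm : m ≤ n) :
    cU (fun v : Fin n => decide ((v : ℕ) < m)) = m := by
  have he : (Finset.univ.filter (fun v : Fin n => (decide ((v:ℕ) < m)) = true))
      = Finset.univ.filter (fun v : Fin n => (v:ℕ) < m) := by simp
  rw [cU, he]
  rw [Finset.card_nbij (fun v : Fin n => (v:ℕ)) (t := Finset.range m)
    (fun a ha => by simpa using (Finset.mem_filter.1 ha).2)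
    (fun a _ b _ hab => Fin.ext hab)
    (fun a ha => by
      simp only [Finset.coe_range, Set.mem_Iio] at ha
      exact ⟨⟨a, lt_of_lt_of_le ha hm⟩, by simp [ha], rfl⟩)]
  exact Finset.card_range m

private lemma cU_false {n : ℕ} : cU (fun _ : Fin n => false) = 0 := by simp [cU]
private lemma cU_true {n : ℕ} : cU (fun _ : Fin n => true) = n := by simp [cU]


/-- Let `n ≥ 2` and `J > 0`, `h > 0` with `h/J` not an integer and `h/J < n−1`.
For the Glauber energy landscape on the complete graph `K_n`, the energy barrier
equals `Γ* = n*·(J·(n−n*) − h)`, where `n* = ⌈(n−1−h/J)/2⌉`. -/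
theorem stmt3 (n : ℕ) (hn : 2 ≤ n) (J h : ℝ) (hJ : 0 < J) (hh : 0 < h)
    (hint : ∀ z : ℤ, h / J ≠ (z : ℝ)) (hlt : h / J < (n : ℝ) - 1) :
    gammaStar (hamiltonian J h (completeEdges n)) =
      (⌈((n : ℝ) - 1 - h / J) / 2⌉ : ℝ) *
        (J * ((n : ℝ) - (⌈((n : ℝ) - 1 - h / J) / 2⌉ : ℝ)) - h) := by
  have hJdivpos : 0 < h / J := div_pos hh hJ
  set x : ℝ := ((n : ℝ) - 1 - h / J) / 2 with hx
  set N : ℤ := ⌈x⌉ with hNdef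
  set F : ℕ → ℝ := fun k =>
    -(J/4) * ((2*(k:ℝ) - n)^2 - n) - (h/2) * (2*(k:ℝ) - n) with hF
  have hxpos : 0 < x := by rw [hx]; linarith
  have hN1 : 1 ≤ N := Int.ceil_pos.2 hxpos
  have hNn : N ≤ (n : ℤ) := Int.ceil_le.2 (by push_cast; rw [hx]; linarith)
  have hceil_ge : x ≤ (N : ℝ) := Int.le_ceil x
  have hceil_lt : (N : ℝ) < x + 1 := Int.ceil_lt_add_one x
  set Nn : ℕ := N.toNat with hNndef
  have hNnN : (Nn : ℝ) = (N : ℝ) := by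
    rw [hNndef]
    exact_mod_cast congrArg (Int.cast : ℤ → ℝ) (Int.toNat_of_nonneg (by omega))
  have hNnle : Nn ≤ n := by omega
  have hamF : ∀ σ : Fin n → Bool,
      hamiltonian J h (completeEdges n) σ = F (cU σ) := by
    intro σ; rw [ham_eq]
  -- key inequality
  have hkey : ∀ k : ℕ, k ≤ n → F k ≤ F Nn := by
    intro k hk
    have hident : F Nn - F k = ((N:ℝ) - (k:ℝ)) * (J*((n:ℝ) - N - (k:ℝ)) - h) := by
      simp only [hF]; rw [hNnN]; ring
    have hx2 : x = ((n : ℝ) - 1 - h / J) / 2 := hx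
    rcases lt_trichotomy (k : ℤ) N with hc | hc | hc
    · have ha : (k:ℝ) ≤ (N:ℝ) - 1 := by
        have : ((k:ℤ):ℝ) ≤ ((N - 1 : ℤ):ℝ) := by exact_mod_cast (by omega : (k:ℤ) ≤ N - 1)
        push_cast at this; linarith
      have e1 : h < ((n:ℝ) + 1 - 2*N) * J := by
        rw [← div_lt_iff₀ hJ]; rw [hx2] at hceil_lt; linarith
      have f1 : (0:ℝ) ≤ (N:ℝ) - (k:ℝ) := by linarith
      have f2 : (0:ℝ) ≤ J*((n:ℝ) - N - (k:ℝ)) - h := by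
        nlinarith [mul_nonneg hJ.le (show (0:ℝ) ≤ (N:ℝ) - 1 - (k:ℝ) by linarith)]
      nlinarith [mul_nonneg f1 f2]
    · have ha : (k:ℝ) = (N:ℝ) := by exact_mod_cast congrArg (Int.cast : ℤ → ℝ) hc
      have h0 : F Nn - F k = 0 := by rw [hident, ha]; ring
      linarith
    · have ha : (N:ℝ) + 1 ≤ (k:ℝ) := by
        have : ((N + 1 : ℤ):ℝ) ≤ ((k:ℤ):ℝ) := by exact_mod_cast (by omega : N + 1 ≤ (k:ℤ))
        push_cast at this; linarith
      have e1 : ((n:ℝ) - 1 - 2*N) * J ≤ h := by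
        rw [← le_div_iff₀ hJ]; rw [hx2] at hceil_ge; linarith
      have f1 : (N:ℝ) - (k:ℝ) ≤ 0 := by linarith
      have f2 : J*((n:ℝ) - N - (k:ℝ)) - h ≤ 0 := by
        nlinarith [mul_nonneg hJ.le (show (0:ℝ) ≤ (k:ℝ) - (N:ℝ) - 1 by linarith)]
      nlinarith [mul_nonneg (neg_nonneg.2 f1) (neg_nonneg.2 f2)]
  -- the set of path heights
  set S : Set ℝ := { M : ℝ | ∃ (k : ℕ) (γ : Fin (k+1) → (Fin n → Bool)),
    γ 0 = (fun _ => false) ∧ γ (Fin.last k) = (fun _ => true) ∧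
    (∀ i : Fin k, IsFlipStep (γ i.castSucc) (γ i.succ)) ∧
    M = Finset.univ.sup' ⟨0, Finset.mem_univ 0⟩
      (fun i => hamiltonian J h (completeEdges n) (γ i)) } with hS
  have hcomm : commHeight (hamiltonian J h (completeEdges n))
      (fun _ => false) (fun _ => true) = sInf S := by
    unfold commHeight
    rw [← hS]
  set M0 : ℝ := (Finset.univ : Finset (Fin (n+1))).sup' ⟨0, Finset.mem_univ 0⟩
      (fun j => F (j:ℕ)) with hM0
  -- membership: the monotone path
  have hmem : M0 ∈ S := by
    refine ⟨n, fun j v => decide ((v:ℕ) < (j:ℕ)), ?_, ?_, ?_, ?_⟩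
    · funext v; simp
    · funext v; simp [Fin.last, v.isLt]
    · intro i
      refine ⟨⟨(i:ℕ), i.isLt⟩, ?_⟩
      funext w
      rcases eq_or_ne w ⟨(i:ℕ), i.isLt⟩ with rfl | hw
      · simp
      · rw [Function.update_of_ne hw]
        have hwv : (w:ℕ) ≠ (i:ℕ) := fun hc => hw (Fin.ext hc)
        simp only [Fin.val_succ, Fin.coe_castSucc, decide_eq_decide]
        omega
    · refine (Finset.sup'_congr ⟨0, Finset.mem_univ 0⟩ rfl ?_).symm
      intro j _
      rw [hamF, card_threshold _ (by omega)]
  -- lower bound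
  have hlb : ∀ M ∈ S, M0 ≤ M := by
    rintro M ⟨k, γ, h0, h1, hflip, rfl⟩
    apply Finset.sup'_le
    intro j _
    set f : ℕ → ℕ := fun i => cU (γ ⟨min i k, by omega⟩) with hf
    have hstep : ∀ i, i < k → f (i+1) ≤ f i + 1 := by
      intro i hi
      have hfs := card_flip (hflip ⟨i, hi⟩)
      have e1 : (⟨min i k, by omega⟩ : Fin (k+1)) = (⟨i, hi⟩ : Fin k).castSucc := by
        apply Fin.ext; simp; omega
      have e2 : (⟨min (i+1) k, by omega⟩ : Fin (k+1)) = (⟨i, hi⟩ : Fin k).succ := by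
        apply Fin.ext; simp; omega
      simp only [hf]
      rw [e1, e2]
      exact hfs
    have hf0 : f 0 = 0 := by
      have e : (⟨min 0 k, by omega⟩ : Fin (k+1)) = 0 := by apply Fin.ext; simp
      simp only [hf]
      rw [e, h0, cU_false]
    have hfk : f k = n := by
      have e : (⟨min k k, by omega⟩ : Fin (k+1)) = Fin.last k := by apply Fin.ext; simp
      simp only [hf]
      rw [e, h1, cU_true]
    obtain ⟨i, hik, hfi⟩ := nat_ivt k f hstep (j:ℕ) (by omega) (by omega)
    have : F (j:ℕ) = hamiltonian J h (completeEdges n) (γ ⟨min i k, by omega⟩) := by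
      rw [hamF]
      congr 1
      rw [← hfi]
    rw [this]
    exact Finset.le_sup' (fun i : Fin (k+1) => hamiltonian J h (completeEdges n) (γ i))
      (Finset.mem_univ _)
  have hS_eq : sInf S = M0 :=
    le_antisymm (csInf_le ⟨M0, fun M hM => hlb M hM⟩ hmem) (le_csInf ⟨M0, hmem⟩ hlb)
  have hM0F : M0 = F Nn := by
    apply le_antisymm
    · exact Finset.sup'_le _ _ (fun j _ => hkey (j:ℕ) (by omega))
    · exact Finset.le_sup' (fun j : Fin (n+1) => F (j:ℕ))
        (Finset.mem_univ (⟨Nn, by omega⟩ : Fin (n+1)))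
  unfold gammaStar
  rw [hcomm, hS_eq, hM0F, hamF, cU_false]
  simp only [hF]
  rw [← hNnN]
  push_cast
  ring
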